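/- arXiv:1304.0974 — 2 statements merged into one kernel-verified Lean document; each statement's English description precedes it below -/
import Mathlib

section
/- The determinant of the W-transformation matrix X_s is strictly positive for every s ≥ 1; consequently the real s-th root d_s = (det X_s)^{1/s} is well-defined and positive. -/
open Matrix

/-- `ξ_i = 1/(2√(4i²-1))`. -/
noncomputable def xi (i : ℕ) : ℝ := 1 / (2 * Real.sqrt (4 * (i : ℝ) ^ 2 - 1))

/-- The tridiagonal W-transformation matrix `X_s` (0-based indexing). -/
noncomputable def Xmat (s : ℕ) : Matrix (Fin s) (Fin s) ℝ :=
  Matrix.of fun i j =>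
    if (i : ℕ) = 0 ∧ (j : ℕ) = 0 then 1 / 2
    else if (j : ℕ) = (i : ℕ) + 1 then -xi ((i : ℕ) + 1)
    else if (i : ℕ) = (j : ℕ) + 1 then xi ((j : ℕ) + 1)
    else 0

lemma Xmat_apply' (s : ℕ) (i j : Fin s) :
    Xmat s i j =
      if (i : ℕ) = 0 ∧ (j : ℕ) = 0 then 1 / 2
      else if (j : ℕ) = (i : ℕ) + 1 then -xi ((i : ℕ) + 1)
      else if (i : ℕ) = (j : ℕ) + 1 then xi ((j : ℕ) + 1)
      else 0 := rfl

lemma succAbove_last_val {n : ℕ} (i : Fin (n+1)) :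
    (((Fin.last (n+1)).succAbove i : Fin (n+2)) : ℕ) = (i : ℕ) := by
  rw [Fin.succAbove_last]; rfl

lemma succAbove_n_val {n : ℕ} (j : Fin (n+1)) :
    (((⟨n, by omega⟩ : Fin (n+2)).succAbove j : Fin (n+2)) : ℕ) =
      if (j : ℕ) < n then (j : ℕ) else (j : ℕ) + 1 := by
  unfold Fin.succAbove
  split_ifs with h1 h2 h2 <;>
    simp_all [Fin.lt_def, Fin.val_succ, Fin.coe_castSucc]

lemma det_rec (n : ℕ) :
    (Xmat (n+2)).det = xi (n+1) ^ 2 * (Xmat n).det := by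
  rw [Matrix.det_succ_row (Xmat (n+2)) (Fin.last (n+1))]
  rw [Finset.sum_eq_single (⟨n, by omega⟩ : Fin (n+2))]
  · set B := (Xmat (n+2)).submatrix (Fin.last (n+1)).succAbove
      (⟨n, by omega⟩ : Fin (n+2)).succAbove with hB
    rw [Matrix.det_succ_column B (Fin.last n)]
    rw [Finset.sum_eq_single (Fin.last n)]
    · have hBent : B (Fin.last n) (Fin.last n) = -xi (n+1) := by
        simp only [hB, Matrix.submatrix_apply, Xmat_apply',
          succAbove_last_val, succAbove_n_val, Fin.val_last]
        have h : ¬ (n < n) := by omega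
        rw [if_neg h]
        have h1 : ¬((n : ℕ) = 0 ∧ (n+1 : ℕ) = 0) := by omega
        rw [if_neg h1, if_pos rfl]
      have hmin : B.submatrix (Fin.last n).succAbove (Fin.last n).succAbove = Xmat n := by
        ext i j
        simp only [hB, Matrix.submatrix_apply, Xmat_apply']
        have hi : (((Fin.last (n+1)).succAbove ((Fin.last n).succAbove i) : Fin (n+2)) : ℕ)
            = (i : ℕ) := by
          rw [succAbove_last_val, Fin.succAbove_last]; rfl
        have hj : (((⟨n, by omega⟩ : Fin (n+2)).succAbove ((Fin.last n).succAbove j) :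
            Fin (n+2)) : ℕ) = (j : ℕ) := by
          rw [Fin.succAbove_last, succAbove_n_val]
          simp [Fin.coe_castSucc, j.isLt]
        rw [hi, hj]
      rw [hmin, hBent]
      have hent : Xmat (n+2) (Fin.last (n+1)) (⟨n, by omega⟩ : Fin (n+2)) = xi (n+1) := by
        rw [Xmat_apply']
        simp only [Fin.val_last]
        have h1 : ¬((n+1 : ℕ) = 0 ∧ (n : ℕ) = 0) := by omega
        have h2 : ¬((n : ℕ) = (n+1) + 1) := by omega
        rw [if_neg h1, if_neg h2]; simp
      rw [hent]
      have hsign : ((Fin.last (n+1) : Fin (n+2)) : ℕ) = n + 1 := rfl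
      have hs2 : ((Fin.last n : Fin (n+1)) : ℕ) = n := rfl
      simp only [hsign, hs2, Fin.val_last]
      ring_nf
      rw [show n*4 = 2*(n*2) by ring, pow_mul]
      norm_num
    · intro i _ hi
      have hiv : (i : ℕ) ≠ n := fun h => hi (Fin.ext h)
      have : B i (Fin.last n) = 0 := by
        simp only [hB, Matrix.submatrix_apply, Xmat_apply',
          succAbove_last_val, succAbove_n_val, Fin.val_last]
        have h : ¬ (n < n) := by omega
        rw [if_neg h]
        have h1 : ¬((i : ℕ) = 0 ∧ (n+1 : ℕ) = 0) := by omega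
        have h2 : ¬((n + 1 : ℕ) = (i : ℕ) + 1) := by omega
        have h3 : ¬((i : ℕ) = (n+1) + 1) := by
          have := i.isLt; omega
        rw [if_neg h1, if_neg h2, if_neg h3]
      simp [this]
    · simp
  · intro j _ hj
    have hjv : (j : ℕ) ≠ n := fun h => hj (Fin.ext h)
    have : Xmat (n+2) (Fin.last (n+1)) j = 0 := by
      simp only [Xmat, Matrix.of_apply, Fin.val_last]
      have h1 : ¬((n+1 : ℕ) = 0 ∧ (j:ℕ) = 0) := by omega
      have h2 : ¬((j:ℕ) = (n+1) + 1) := by omega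
      have h3 : ¬((n+1 : ℕ) = (j:ℕ) + 1) := by omega
      simp [h1, h2, h3, Ne.symm hjv]
    simp [this]
  · simp

lemma xi_pos (k : ℕ) (hk : 1 ≤ k) : 0 < xi k := by
  have h1 : (1:ℝ) ≤ (k:ℝ) := by exact_mod_cast hk
  have h : (0:ℝ) < 4 * (k:ℝ)^2 - 1 := by nlinarith
  have hs := Real.sqrt_pos.mpr h
  unfold xi; positivity

lemma Xmat_det_pos : ∀ s : ℕ, 0 < (Xmat s).det := by
  intro s
  induction s using Nat.strong_induction_on with
  | _ s ih =>
    match s with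
    | 0 => simp
    | 1 =>
      rw [Matrix.det_fin_one]
      norm_num [Xmat_apply']
    | (n+2) =>
      rw [det_rec]
      have := xi_pos (n+1) (by omega)
      have := ih n (by omega)
      positivity

/-- `det(X_s) > 0` for every `s ≥ 1`; consequently the real `s`-th root
`d_s = (det X_s)^{1/s}` is well defined and positive. -/
theorem stmt5 (s : ℕ) (hs : 1 ≤ s) :
    0 < (Xmat s).det ∧ 0 < Real.rpow (Xmat s).det (1 / (s : ℝ)) :=
  ⟨Xmat_det_pos s, Real.rpow_pos_of_pos (Xmat_det_pos s) _⟩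
end

section
/- Let σ be the polynomial of degree s defined by σ(ch) = y₀ + h Σ_{j=0}^{s-1} γ_j ∫₀^c P_j(x)dx where γ_j = ∫₀¹ J∇H(σ(τh))P_j(τ)dτ, and suppose H is a polynomial so that these integrals make sense with σ a polynomial. Then H(σ(h)) = H(y₀), i.e., the HBVM polynomial approximation exactly conserves the Hamiltonian when the integrals γ_j are computed exactly. -/
open Matrix

/-- The HBVM polynomial approximation
`σ(ch) = y₀ + h Σ_{j=0}^{s-1} γ_j ∫₀^c P_j(x) dx`, with
`γ_j = ∫₀¹ P_j(τ) J∇H(σ(τh)) dτ` computed exactly, exactly conserves the Hamiltonian: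
`H(σ(h)) = H(y₀)`. -/
theorem stmt15 (m s : ℕ) (H : EuclideanSpace ℝ (Fin m ⊕ Fin m) → ℝ)
    (hH : ContDiff ℝ 1 H)
    (J : Matrix (Fin m ⊕ Fin m) (Fin m ⊕ Fin m) ℝ)
    (hJ : J = Matrix.fromBlocks 0 1 (-1) 0)
    (P : ℕ → Polynomial ℝ)
    (hdeg : ∀ j : ℕ, (P j).degree = j)
    (horth : ∀ i j : ℕ,
      (∫ x in (0:ℝ)..1, (P i).eval x * (P j).eval x) = if i = j then 1 else 0)
    (h : ℝ) (y₀ : EuclideanSpace ℝ (Fin m ⊕ Fin m))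
    (γ : ℕ → EuclideanSpace ℝ (Fin m ⊕ Fin m))
    (σ : ℝ → EuclideanSpace ℝ (Fin m ⊕ Fin m))
    (hσ : ∀ c : ℝ, σ (c * h) = y₀ + h • ∑ j ∈ Finset.range s,
      (∫ x in (0:ℝ)..c, (P j).eval x) • γ j)
    (hγ : ∀ j < s, γ j = ∫ τ in (0:ℝ)..1,
      (P j).eval τ • Matrix.toEuclideanLin J (gradient H (σ (τ * h)))) :
    H (σ h) = H y₀ := by
  classical
  set F : ℝ → EuclideanSpace ℝ (Fin m ⊕ Fin m) := fun c => y₀ + h • ∑ j ∈ Finset.range s,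
      (∫ x in (0:ℝ)..c, (P j).eval x) • γ j with hFdef
  have hσF : ∀ c : ℝ, σ (c * h) = F c := hσ
  have hF0 : F 0 = y₀ := by simp [hFdef]
  have hF1 : σ h = F 1 := by have := hσF 1; rwa [one_mul] at this
  -- derivative of F
  have hFder : ∀ c : ℝ, HasDerivAt F
      (h • ∑ j ∈ Finset.range s, (P j).eval c • γ j) c := by
    intro c
    have hsum : HasDerivAt (fun c : ℝ => ∑ j ∈ Finset.range s,
        (∫ x in (0:ℝ)..c, (P j).eval x) • γ j)
        (∑ j ∈ Finset.range s, (P j).eval c • γ j) c := by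
      refine HasDerivAt.fun_sum fun j _ => ?_
      have h1 : HasDerivAt (fun c : ℝ => ∫ x in (0:ℝ)..c, (P j).eval x)
          ((P j).eval c) c := by
        refine intervalIntegral.integral_hasDerivAt_right
          (((P j).continuous).intervalIntegrable _ _) ?_ ((P j).continuous).continuousAt
        exact ((P j).continuous).stronglyMeasurableAtFilter _ _
      exact h1.smul_const (γ j)
    exact (hsum.const_smul h).const_add y₀
  have hFcont : Continuous F := continuous_iff_continuousAt.2 fun c => (hFder c).continuousAt
  -- gradient continuity
  have hgrad_cont : Continuous (gradient H) := by
    have h1 : Continuous (fderiv ℝ H) := hH.continuous_fderiv one_ne_zero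
    have h2 : gradient H = fun x => (InnerProductSpace.toDual ℝ (EuclideanSpace ℝ (Fin m ⊕ Fin m))).symm (fderiv ℝ H x) := rfl
    rw [h2]
    exact (InnerProductSpace.toDual ℝ (EuclideanSpace ℝ (Fin m ⊕ Fin m))).symm.continuous.comp h1
  set G : ℝ → EuclideanSpace ℝ (Fin m ⊕ Fin m) := fun c => gradient H (F c) with hGdef
  have hGcont : Continuous G := hgrad_cont.comp hFcont
  -- chain rule
  have hcomp : ∀ c : ℝ, HasDerivAt (fun c => H (F c))
      ((inner ℝ (G c) (h • ∑ j ∈ Finset.range s, (P j).eval c • γ j) : ℝ)) c := by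
    intro c
    have hHd : HasFDerivAt H ((InnerProductSpace.toDual ℝ (EuclideanSpace ℝ (Fin m ⊕ Fin m))) (gradient H (F c))) (F c) :=
      ((hH.differentiable one_ne_zero) (F c)).hasGradientAt.hasFDerivAt
    have := hHd.comp_hasDerivAt c (hFder c)
    simpa only [Function.comp_def, InnerProductSpace.toDual_apply_apply] using this
  have hφcont : Continuous fun c : ℝ =>
      (inner ℝ (G c) (h • ∑ j ∈ Finset.range s, (P j).eval c • γ j) : ℝ) := by
    refine Continuous.inner hGcont ?_
    exact (continuous_finset_sum _ fun j _ => ((P j).continuous).smul continuous_const).const_smul h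
  have key : (∫ c in (0:ℝ)..1,
      (inner ℝ (G c) (h • ∑ j ∈ Finset.range s, (P j).eval c • γ j) : ℝ)) = H (F 1) - H (F 0) :=
    intervalIntegral.integral_eq_sub_of_hasDerivAt (fun c _ => hcomp c)
      (hφcont.intervalIntegrable 0 1)
  -- the continuous linear map of J
  set LJ : EuclideanSpace ℝ (Fin m ⊕ Fin m) →L[ℝ] EuclideanSpace ℝ (Fin m ⊕ Fin m) := LinearMap.toContinuousLinearMap (Matrix.toEuclideanLin J) with hLJdef
  have hLJ : ∀ x : EuclideanSpace ℝ (Fin m ⊕ Fin m), LJ x = Matrix.toEuclideanLin J x := fun x => rfl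
  -- skewness
  have skew : ∀ x : EuclideanSpace ℝ (Fin m ⊕ Fin m), (inner ℝ (LJ x) x : ℝ) = 0 := by
    intro x
    have hJt : Jᴴ = -J := by
      subst hJ
      ext i j
      rcases i with i|i <;> rcases j with j|j <;>
        simp [Matrix.conjTranspose_apply, Matrix.fromBlocks, Matrix.one_apply, eq_comm]
    have hadj : LinearMap.adjoint (Matrix.toEuclideanLin J) = -(Matrix.toEuclideanLin J) := by
      rw [← Matrix.toEuclideanLin_conjTranspose_eq_adjoint, hJt, map_neg]
    have h1 : (inner ℝ (Matrix.toEuclideanLin J x) x : ℝ)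
        = inner ℝ x ((LinearMap.adjoint (Matrix.toEuclideanLin J)) x) :=
      (LinearMap.adjoint_inner_right _ _ _).symm
    rw [hadj] at h1
    simp only [LinearMap.neg_apply, inner_neg_right] at h1
    rw [real_inner_comm] at h1
    rw [hLJ, real_inner_comm]
    linarith
  -- v j
  set v : ℕ → EuclideanSpace ℝ (Fin m ⊕ Fin m) := fun j => ∫ c in (0:ℝ)..1, (P j).eval c • G c with hvdef
  have hsmulcont : ∀ j, Continuous fun c : ℝ => (P j).eval c • G c :=
    fun j => ((P j).continuous).smul hGcont
  have hγ' : ∀ j < s, γ j = LJ (v j) := by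
    intro j hj
    rw [hγ j hj]
    have e1 : ∀ τ : ℝ, (P j).eval τ • Matrix.toEuclideanLin J (gradient H (σ (τ * h)))
        = LJ ((P j).eval τ • G τ) := by
      intro τ
      rw [hσF τ, LJ.map_smul, hLJ]
    rw [intervalIntegral.integral_congr (fun τ _ => e1 τ)]
    exact LJ.intervalIntegral_comp_comm ((hsmulcont j).intervalIntegrable 0 1)
  -- compute the integral
  have step1 : ∀ c : ℝ, (inner ℝ (G c) (h • ∑ j ∈ Finset.range s, (P j).eval c • γ j) : ℝ)
      = ∑ j ∈ Finset.range s, h * ((innerSL ℝ (γ j)) ((P j).eval c • G c)) := by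
    intro c
    rw [real_inner_smul_right, inner_sum, Finset.mul_sum]
    refine Finset.sum_congr rfl fun j _ => ?_
    rw [real_inner_smul_right, innerSL_apply_apply, real_inner_smul_right, real_inner_comm]
  have hint : (∫ c in (0:ℝ)..1,
      (inner ℝ (G c) (h • ∑ j ∈ Finset.range s, (P j).eval c • γ j) : ℝ))
      = ∑ j ∈ Finset.range s, h * (inner ℝ (γ j) (v j) : ℝ) := by
    simp only [step1]
    rw [intervalIntegral.integral_finset_sum]
    · refine Finset.sum_congr rfl fun j _ => ?_
      rw [intervalIntegral.integral_const_mul,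
        (innerSL ℝ (γ j)).intervalIntegral_comp_comm ((hsmulcont j).intervalIntegrable 0 1)]
      rfl
    · intro j _
      exact (continuous_const.mul ((innerSL ℝ (γ j)).continuous.comp (hsmulcont j))).intervalIntegrable 0 1
  have hzero : ∀ j ∈ Finset.range s, h * (inner ℝ (γ j) (v j) : ℝ) = 0 := by
    intro j hj
    rw [hγ' j (Finset.mem_range.1 hj), skew (v j), mul_zero]
  have hsum0 : H (F 1) - H (F 0) = 0 := by
    rw [← key, hint, Finset.sum_eq_zero hzero]
  rw [hF0] at hsum0
  rw [hF1]
  linarith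
end
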